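/- For every n ≥ 3, the order superpower graph S(S_n) of the symmetric group S_n is not minimally edge connected. -/

import Mathlib

/-- The degree of a vertex: the number of its neighbours. -/
noncomputable def gDeg {V : Type*} (G : SimpleGraph V) (v : V) : ℕ :=
  (G.neighborSet v).ncard

/-- The minimum degree of a graph. -/
noncomputable def minDeg {V : Type*} (G : SimpleGraph V) : ℕ :=
  sInf (Set.range (gDeg G))

/-- The edge connectivity: the minimum size of a set of edges whose removal
disconnects the graph. -/
noncomputable def edgeConn {V : Type*} (G : SimpleGraph V) : ℕ :=
  sInf {n : ℕ | ∃ S : Set (Sym2 V), S ⊆ G.edgeSet ∧ S.ncard = n ∧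
    ¬ (G.deleteEdges S).Connected}

/-- The vertex connectivity: the minimum size of a set of vertices whose removal
disconnects the graph or leaves a single vertex. -/
noncomputable def vertexConn {V : Type*} (G : SimpleGraph V) : ℕ :=
  sInf {n : ℕ | ∃ S : Set V, S.ncard = n ∧ Sᶜ.Nonempty ∧
    (¬ (G.induce Sᶜ).Preconnected ∨ Sᶜ.ncard = 1)}

/-- A graph is minimally edge connected if deleting any edge decreases the
edge connectivity by one. -/
def MinEdgeConnected {V : Type*} (G : SimpleGraph V) : Prop :=
  ∀ e ∈ G.edgeSet, edgeConn (G.deleteEdges {e}) = edgeConn G - 1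

/-- A graph is minimally connected if deleting any edge decreases the
vertex connectivity by one. -/
def MinConnected {V : Type*} (G : SimpleGraph V) : Prop :=
  ∀ e ∈ G.edgeSet, vertexConn (G.deleteEdges {e}) = vertexConn G - 1

/-- The power graph of a group: distinct `x, y` are adjacent iff one is a
natural power of the other. -/
def powerGraph (G : Type*) [Group G] : SimpleGraph G :=
  SimpleGraph.fromRel (fun x y => ∃ m : ℕ, y = x ^ m)

/-- The enhanced power graph of a group: distinct `x, y` are adjacent iff they
lie in a common cyclic subgroup. -/
def enhancedPowerGraph (G : Type*) [Group G] : SimpleGraph G :=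
  SimpleGraph.fromRel
    (fun x y => ∃ z : G, x ∈ Subgroup.zpowers z ∧ y ∈ Subgroup.zpowers z)

/-- The order superpower graph of a group: distinct `x, y` are adjacent iff the
order of one divides the order of the other. -/
def superpowerGraph (G : Type*) [Group G] : SimpleGraph G :=
  SimpleGraph.fromRel (fun x y => orderOf x ∣ orderOf y)

set_option maxRecDepth 100000
set_option linter.unusedSectionVars false

open SimpleGraph Set

section GraphLemmas
variable {V : Type*} [Fintype V] [DecidableEq V]

/-- The star at a vertex `w` is a disconnecting edge set of size `gDeg G w`. -/
lemma star_mem (G : SimpleGraph V) (w x0 : V) (hx : x0 ≠ w) :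
    ∃ S : Set (Sym2 V), S ⊆ G.edgeSet ∧ S.ncard = gDeg G w ∧
      ¬ (G.deleteEdges S).Connected := by
  classical
  refine ⟨(fun y => s(w, y)) '' G.neighborSet w, ?_, ?_, ?_⟩
  · rintro p ⟨y, hy, rfl⟩
    exact hy
  · have hinj : Set.InjOn (fun y => s(w, y)) (G.neighborSet w) := by
      intro a _ b _ hab
      simp only [Sym2.eq, Sym2.rel_iff', Prod.mk.injEq, Prod.swap_prod_mk] at hab
      rcases hab with ⟨-, h⟩ | ⟨h1, h2⟩
      · exact h
      · rw [h2, h1]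
    rw [Set.ncard_image_of_injOn hinj]
    rfl
  · intro hconn
    obtain ⟨p⟩ := hconn.preconnected w x0
    cases p with
    | nil => exact hx rfl
    | cons h q =>
      rw [SimpleGraph.deleteEdges_adj] at h
      exact h.2 ⟨_, h.1, rfl⟩

lemma edgeConn_le_gDeg (G : SimpleGraph V) (w x0 : V) (hx : x0 ≠ w) :
    edgeConn G ≤ gDeg G w := by
  obtain ⟨S, h1, h2, h3⟩ := star_mem G w x0 hx
  exact Nat.sInf_le ⟨S, h1, h2, h3⟩

lemma edgeConn_pos (G : SimpleGraph V) (hG : G.Connected) (w x0 : V) (hx : x0 ≠ w) :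
    1 ≤ edgeConn G := by
  by_contra h
  push_neg at h
  have h' : edgeConn G = 0 := by omega
  have hne : {n : ℕ | ∃ S : Set (Sym2 V), S ⊆ G.edgeSet ∧ S.ncard = n ∧
      ¬ (G.deleteEdges S).Connected}.Nonempty := by
    obtain ⟨S, h1, h2, h3⟩ := star_mem G w x0 hx
    exact ⟨_, S, h1, h2, h3⟩
  have h0 : (0 : ℕ) ∈ {n : ℕ | ∃ S : Set (Sym2 V), S ⊆ G.edgeSet ∧ S.ncard = n ∧
      ¬ (G.deleteEdges S).Connected} := by
    rw [← h']; exact Nat.sInf_mem hne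
  obtain ⟨S, hS1, hS2, hS3⟩ := h0
  rw [Set.ncard_eq_zero (Set.toFinite S)] at hS2
  subst hS2
  rw [SimpleGraph.deleteEdges_empty] at hS3
  exact hS3 hG

/-- In a minimally edge connected graph, any edge joining two adjacent
"true twins" forces the degree of the twins to be at most the edge
connectivity. -/
lemma key_twin (G : SimpleGraph V) (hG : G.Connected) (u v : V) (huv : G.Adj u v)
    (twin : ∀ x, x ≠ u → x ≠ v → (G.Adj u x ↔ G.Adj v x))
    (hmin : MinEdgeConnected G) : gDeg G u ≤ edgeConn G := by
  classical
  set κ := edgeConn G with hκdef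
  have hκ1 : 1 ≤ κ := edgeConn_pos G hG u v huv.ne'
  have he : s(u, v) ∈ G.edgeSet := huv
  have hdel := hmin _ he
  set G' := G.deleteEdges {s(u, v)} with hG'def
  have hne' : {n : ℕ | ∃ S : Set (Sym2 V), S ⊆ G'.edgeSet ∧ S.ncard = n ∧
      ¬ (G'.deleteEdges S).Connected}.Nonempty := by
    obtain ⟨S, h1, h2, h3⟩ := star_mem G' u v huv.ne'
    exact ⟨_, S, h1, h2, h3⟩
  have hmem := Nat.sInf_mem hne'
  rw [show sInf {n : ℕ | ∃ S : Set (Sym2 V), S ⊆ G'.edgeSet ∧ S.ncard = n ∧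
      ¬ (G'.deleteEdges S).Connected} = edgeConn G' from rfl, hdel] at hmem
  obtain ⟨S', hS'sub, hS'card, hS'disc⟩ := hmem
  have heS' : s(u, v) ∉ S' := by
    intro h
    have := hS'sub h
    rw [hG'def, SimpleGraph.edgeSet_deleteEdges] at this
    exact this.2 rfl
  set S : Set (Sym2 V) := insert s(u, v) S' with hSdef
  have hSsub : S ⊆ G.edgeSet := by
    rintro p (rfl | hp)
    · exact he
    · have := hS'sub hp
      rw [hG'def, SimpleGraph.edgeSet_deleteEdges] at this
      exact this.1
  have hScard : S.ncard = κ := by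
    rw [hSdef, Set.ncard_insert_of_notMem heS' (Set.toFinite S'), hS'card]
    omega
  have hSdel : G.deleteEdges S = G'.deleteEdges S' := by
    ext a b
    simp only [SimpleGraph.deleteEdges_adj, hG'def, hSdef, Set.mem_insert_iff,
      Set.mem_singleton_iff]
    tauto
  have hSdisc : ¬ (G.deleteEdges S).Connected := by rw [hSdel]; exact hS'disc
  set A : Set V := {x | (G.deleteEdges S).Reachable u x} with hAdef
  have huA : u ∈ A := ⟨SimpleGraph.Walk.nil⟩
  have hAcross : ∀ a b, a ∈ A → b ∉ A → G.Adj a b → s(a, b) ∈ S := by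
    intro a b ha hb hab
    by_contra h
    exact hb (ha.trans (SimpleGraph.Adj.reachable
      (by rw [SimpleGraph.deleteEdges_adj]; exact ⟨hab, h⟩)))
  set B : Set (Sym2 V) := {p | p ∈ G.edgeSet ∧ ∃ a b, p = s(a, b) ∧ a ∈ A ∧ b ∉ A}
    with hBdef
  have hBS : B ⊆ S := by
    rintro p ⟨hpe, a, b, rfl, ha, hb⟩
    exact hAcross a b ha hb hpe
  have hstay : ∀ x y : V, (G.deleteEdges B).Walk x y → x ∈ A → y ∈ A := by
    intro x y p
    induction p with
    | nil => exact id
    | cons h q ih =>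
      intro hx
      apply ih
      rw [SimpleGraph.deleteEdges_adj] at h
      by_contra hc
      exact h.2 ⟨h.1, _, _, rfl, hx, hc⟩
  have hz0 : ∃ z0, z0 ∉ A := by
    by_contra h
    push_neg at h
    apply hSdisc
    haveI : Nonempty V := ⟨u⟩
    exact ⟨fun x y => (h x).symm.trans (h y)⟩
  obtain ⟨z0, hz0⟩ := hz0
  have hBdisc : ¬ (G.deleteEdges B).Connected := by
    intro h
    obtain ⟨p⟩ := h.preconnected u z0
    exact hz0 (hstay u z0 p huA)
  have hκB : κ ≤ B.ncard := Nat.sInf_le ⟨B, fun p hp => (hBS hp) |> hSsub, rfl, hBdisc⟩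
  have hBeq : B = S := Set.eq_of_subset_of_ncard_le hBS (by rw [hScard]; exact hκB)
    (Set.toFinite S)
  have hvA : v ∉ A := by
    have : s(u, v) ∈ B := by rw [hBeq]; exact Set.mem_insert _ _
    obtain ⟨-, a, b, hab, ha, hb⟩ := this
    rw [Sym2.eq_iff] at hab
    rcases hab with ⟨rfl, rfl⟩ | ⟨rfl, rfl⟩
    · exact hb
    · exact absurd huA hb
  set ψ : V → Sym2 V := fun x => if x ∈ A then s(x, v) else s(u, x) with hψdef
  have hψmem : ∀ x ∈ G.neighborSet u, ψ x ∈ S := by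
    intro x hx
    rw [SimpleGraph.mem_neighborSet] at hx
    rw [hψdef]
    by_cases hxA : x ∈ A
    · simp only [hxA, if_true]
      have hxv : x ≠ v := fun h => hvA (h ▸ hxA)
      have hadj : G.Adj x v := ((twin x hx.ne' hxv).mp hx).symm
      exact hAcross x v hxA hvA hadj
    · simp only [hxA, if_false]
      exact hAcross u x huA hxA hx
  have hψinj : Set.InjOn ψ (G.neighborSet u) := by
    intro x hx y hy hxy
    rw [SimpleGraph.mem_neighborSet] at hx hy
    have hxu : x ≠ u := hx.ne'
    have hyu : y ≠ u := hy.ne'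
    have hvu : v ≠ u := huv.ne'
    rw [hψdef] at hxy
    by_cases hxA : x ∈ A <;> by_cases hyA : y ∈ A <;>
      simp only [hxA, hyA, if_true, if_false, Sym2.eq_iff] at hxy <;>
      rcases hxy with ⟨h1, h2⟩ | ⟨h1, h2⟩ <;> subst_vars <;>
        first
          | rfl
          | tauto
  calc gDeg G u = (ψ '' G.neighborSet u).ncard := (Set.ncard_image_of_injOn hψinj).symm
    _ ≤ S.ncard := Set.ncard_le_ncard (by rintro p ⟨x, hx, rfl⟩; exact hψmem x hx)
        (Set.toFinite S)
    _ = κ := hScard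

lemma gDeg_lt_of_subset (G : SimpleGraph V) (u w z : V)
    (huw : G.Adj u w) (hz : G.Adj u z) (hzw : ¬ G.Adj w z) (hzw' : z ≠ w)
    (hsub : ∀ x, G.Adj w x → x = u ∨ G.Adj u x) : gDeg G w < gDeg G u := by
  have h1 : insert w (G.neighborSet w) ⊆ insert u (G.neighborSet u) \ {z} := by
    rintro x (rfl | hx)
    · refine ⟨Or.inr huw, ?_⟩
      simp only [Set.mem_singleton_iff]
      exact fun h => absurd h.symm hzw'
    · refine ⟨?_, ?_⟩
      · rcases hsub x hx with h | h
        · exact Or.inl h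
        · exact Or.inr h
      · simp only [Set.mem_singleton_iff]
        rintro rfl
        exact hzw hx
  have hzmem : z ∈ insert u (G.neighborSet u) := Or.inr hz
  have c1 : (insert w (G.neighborSet w)).ncard = gDeg G w + 1 :=
    Set.ncard_insert_of_notMem (fun h => G.irrefl h) (Set.toFinite _)
  have c2 : (insert u (G.neighborSet u) \ {z}).ncard
      = gDeg G u + 1 - 1 := by
    have e1 : (insert u (G.neighborSet u)).ncard = gDeg G u + 1 :=
      Set.ncard_insert_of_notMem (fun h => G.irrefl h) (Set.toFinite _)
    rw [Set.ncard_diff_singleton_of_mem hzmem, e1]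
  have := Set.ncard_le_ncard h1 (Set.toFinite _)
  omega

lemma gDeg_lt_of_bounds (G : SimpleGraph V) (u w : V) (Bw Bu : Finset V)
    (h1 : G.neighborSet w ⊆ ↑Bw) (h2 : ↑Bu ⊆ G.neighborSet u)
    (h : Bw.card < Bu.card) : gDeg G w < gDeg G u := by
  have a1 : gDeg G w ≤ Bw.card := by
    rw [← Set.ncard_coe_finset]
    exact Set.ncard_le_ncard h1 (Set.toFinite _)
  have a2 : Bu.card ≤ gDeg G u := by
    rw [← Set.ncard_coe_finset Bu]
    exact Set.ncard_le_ncard h2 (Set.toFinite _)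
  omega
end GraphLemmas

lemma spg_adj {Γ : Type*} [Group Γ] {x y : Γ} :
    (superpowerGraph Γ).Adj x y ↔
      x ≠ y ∧ (orderOf x ∣ orderOf y ∨ orderOf y ∣ orderOf x) := by
  rw [superpowerGraph, SimpleGraph.fromRel_adj]

lemma spg_connected (Γ : Type*) [Group Γ] : (superpowerGraph Γ).Connected := by
  haveI : Nonempty Γ := ⟨1⟩
  have key : ∀ z : Γ, z ≠ 1 → (superpowerGraph Γ).Adj 1 z := by
    intro z hz
    rw [spg_adj]
    exact ⟨Ne.symm hz, Or.inl (by rw [orderOf_one]; exact one_dvd _)⟩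
  refine ⟨fun x y => ?_⟩
  by_cases hx : x = 1
  · subst hx
    by_cases hy : y = 1
    · subst hy; exact SimpleGraph.Reachable.refl _
    · exact (key y hy).reachable
  · by_cases hy : y = 1
    · subst hy; exact ((key x hx).symm).reachable
    · exact ((key x hx).symm.reachable).trans (key y hy).reachable

lemma spg_twin {Γ : Type*} [Group Γ] {u v : Γ} (h : orderOf u = orderOf v) :
    ∀ x, x ≠ u → x ≠ v →
      ((superpowerGraph Γ).Adj u x ↔ (superpowerGraph Γ).Adj v x) := by
  intro x hxu hxv
  rw [spg_adj, spg_adj, h]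
  constructor
  · rintro ⟨-, h2⟩; exact ⟨Ne.symm hxv, h2⟩
  · rintro ⟨-, h2⟩; exact ⟨Ne.symm hxu, h2⟩

lemma ord_two {Γ : Type*} [Group Γ] {x : Γ} (h1 : x ≠ 1) (h2 : x ^ 2 = 1) :
    orderOf x = 2 := orderOf_eq_prime h2 h1

lemma ord_three {Γ : Type*} [Group Γ] {x : Γ} (h1 : x ≠ 1) (h2 : x ^ 3 = 1) :
    orderOf x = 3 := orderOf_eq_prime h2 h1

lemma ord_four {Γ : Type*} [Group Γ] {x : Γ} (h1 : x ^ 2 ≠ 1) (h2 : x ^ 4 = 1) :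
    orderOf x = 4 := by
  have := orderOf_eq_prime_pow (p := 2) (n := 1) (x := x) (by simpa using h1)
    (by norm_num; exact h2)
  norm_num at this
  exact this

lemma ord_six {Γ : Type*} [Group Γ] {x : Γ} (h2 : x ^ 2 ≠ 1) (h3 : x ^ 3 ≠ 1)
    (h6 : x ^ 6 = 1) : orderOf x = 6 := by
  have hd : orderOf x ∣ 6 := orderOf_dvd_iff_pow_eq_one.mpr h6
  have h2' : ¬ orderOf x ∣ 2 := fun h => h2 (orderOf_dvd_iff_pow_eq_one.mp h)
  have h3' : ¬ orderOf x ∣ 3 := fun h => h3 (orderOf_dvd_iff_pow_eq_one.mp h)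
  have hle : orderOf x ≤ 6 := Nat.le_of_dvd (by norm_num) hd
  interval_cases h : orderOf x <;> revert hd h2' h3' <;> decide

lemma dvd_four_cases {d : ℕ} (h : d ∣ 4) : 2 ∣ d ∨ d ∣ 2 := by
  have := Nat.le_of_dvd (by norm_num) h
  interval_cases d <;> revert h <;> decide

lemma dvd_four_two {d : ℕ} (h : d ∣ 4) (h1 : d ≠ 1) : 2 ∣ d := by
  have := Nat.le_of_dvd (by norm_num) h
  interval_cases d <;> revert h h1 <;> decide

lemma dvd_two_not_three {d : ℕ} (h2 : d ∣ 2) (h3 : 3 ∣ d) (hp : 0 < d) : False := by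
  have := Nat.le_of_dvd (by norm_num) h2
  interval_cases d <;> revert h2 h3 <;> decide

lemma dvd_four_not_three {d : ℕ} (h2 : d ∣ 4) (h3 : 3 ∣ d) (hp : 0 < d) : False := by
  have := Nat.le_of_dvd (by norm_num) h2
  interval_cases d <;> revert h2 h3 <;> decide

lemma dvd_two_ne_one {d : ℕ} (h2 : d ∣ 2) (h1 : d ≠ 1) (hp : 0 < d) : d = 2 := by
  have := Nat.le_of_dvd (by norm_num) h2
  interval_cases d <;> revert h2 h1 <;> decide

/-- The general contradiction pattern. -/
lemma not_minEdge {V : Type*} [Fintype V] [DecidableEq V] (G : SimpleGraph V)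
    (hG : G.Connected) (u v w : V) (huv : G.Adj u v)
    (twin : ∀ x, x ≠ u → x ≠ v → (G.Adj u x ↔ G.Adj v x))
    (huw : u ≠ w) (hdeg : gDeg G w < gDeg G u) : ¬ MinEdgeConnected G := by
  intro hmin
  have h1 := key_twin G hG u v huv twin hmin
  have h2 := edgeConn_le_gDeg G w u huw
  omega

/-- For `n ≥ 3`, the order superpower graph of the symmetric group
`S_n` is not minimally edge connected. -/
theorem stmt_11 (n : ℕ) (hn : 3 ≤ n) :
    ¬ MinEdgeConnected (superpowerGraph (Equiv.Perm (Fin n))) := by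
  classical
  obtain rfl | rfl | h5 : n = 3 ∨ n = 4 ∨ 5 ≤ n := by omega
  · -- n = 3
    set Γ := Equiv.Perm (Fin 3)
    set G := superpowerGraph Γ with hGdef
    set u : Γ := Equiv.swap 0 1 with hu
    set v : Γ := Equiv.swap 0 2 with hv
    set w : Γ := Equiv.swap 0 1 * Equiv.swap 1 2 with hw
    have ordu : orderOf u = 2 := ord_two (by decide) (by decide)
    have ordv : orderOf v = 2 := ord_two (by decide) (by decide)
    have ordw : orderOf w = 3 := ord_three (by decide) (by decide)
    have dic : ∀ x : Γ, x ^ 2 = 1 ∨ x ^ 3 = 1 := by decide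
    have huv : G.Adj u v := spg_adj.mpr ⟨by decide, Or.inl (by rw [ordu, ordv])⟩
    refine not_minEdge G (spg_connected Γ) u v w huv
      (spg_twin (ordu.trans ordv.symm)) (by decide) ?_
    refine gDeg_lt_of_bounds G u w
      (Finset.univ.filter (fun x : Γ => x ≠ w ∧ x ^ 3 = 1))
      (insert 1 (Finset.univ.filter (fun x : Γ => x ≠ u ∧ x ^ 3 ≠ 1))) ?_ ?_ (by decide)
    · intro x hx
      rw [SimpleGraph.mem_neighborSet, spg_adj, ordw] at hx
      obtain ⟨hne, hdvd⟩ := hx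
      simp only [Finset.coe_filter, Finset.mem_univ, true_and, Set.mem_setOf_eq]
      refine ⟨Ne.symm hne, ?_⟩
      rcases hdvd with h | h
      · rcases dic x with h2 | h3
        · exact (dvd_two_not_three (orderOf_dvd_iff_pow_eq_one.mpr h2) h
            (orderOf_pos x)).elim
        · exact h3
      · exact orderOf_dvd_iff_pow_eq_one.mp h
    · intro x hx
      simp only [Finset.coe_insert, Set.mem_insert_iff, Finset.coe_filter,
        Finset.mem_univ, true_and, Set.mem_setOf_eq] at hx
      rw [SimpleGraph.mem_neighborSet, spg_adj, ordu]
      rcases hx with rfl | ⟨hxu, hx3⟩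
      · exact ⟨by decide, Or.inr (by rw [orderOf_one]; exact one_dvd _)⟩
      · refine ⟨Ne.symm hxu, Or.inl ?_⟩
        rcases dic x with h2 | h3
        · have hd2 : orderOf x ∣ 2 := orderOf_dvd_iff_pow_eq_one.mpr h2
          have hne1 : orderOf x ≠ 1 := by
            intro h
            rw [orderOf_eq_one_iff] at h
            subst h
            exact hx3 (one_pow 3)
          rw [dvd_two_ne_one hd2 hne1 (orderOf_pos x)]
        · exact absurd h3 hx3
  · -- n = 4
    set Γ := Equiv.Perm (Fin 4)
    set G := superpowerGraph Γ with hGdef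
    set u : Γ := Equiv.swap 0 1 with hu
    set v : Γ := Equiv.swap 0 2 with hv
    set w : Γ := Equiv.swap 0 1 * Equiv.swap 1 2 with hw
    have ordu : orderOf u = 2 := ord_two (by decide) (by decide)
    have ordv : orderOf v = 2 := ord_two (by decide) (by decide)
    have ordw : orderOf w = 3 := ord_three (by decide) (by decide)
    have dic : ∀ x : Γ, x ^ 4 = 1 ∨ x ^ 3 = 1 := by decide
    have huv : G.Adj u v := spg_adj.mpr ⟨by decide, Or.inl (by rw [ordu, ordv])⟩
    refine not_minEdge G (spg_connected Γ) u v w huv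
      (spg_twin (ordu.trans ordv.symm)) (by decide) ?_
    refine gDeg_lt_of_bounds G u w
      (Finset.univ.filter (fun x : Γ => x ≠ w ∧ x ^ 3 = 1))
      (insert 1 (Finset.univ.filter (fun x : Γ => x ≠ u ∧ x ^ 3 ≠ 1))) ?_ ?_ (by decide)
    · intro x hx
      rw [SimpleGraph.mem_neighborSet, spg_adj, ordw] at hx
      obtain ⟨hne, hdvd⟩ := hx
      simp only [Finset.coe_filter, Finset.mem_univ, true_and, Set.mem_setOf_eq]
      refine ⟨Ne.symm hne, ?_⟩
      rcases hdvd with h | h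
      · rcases dic x with h4 | h3
        · exact (dvd_four_not_three (orderOf_dvd_iff_pow_eq_one.mpr h4) h
            (orderOf_pos x)).elim
        · exact h3
      · exact orderOf_dvd_iff_pow_eq_one.mp h
    · intro x hx
      simp only [Finset.coe_insert, Set.mem_insert_iff, Finset.coe_filter,
        Finset.mem_univ, true_and, Set.mem_setOf_eq] at hx
      rw [SimpleGraph.mem_neighborSet, spg_adj, ordu]
      rcases hx with rfl | ⟨hxu, hx3⟩
      · exact ⟨by decide, Or.inr (by rw [orderOf_one]; exact one_dvd _)⟩
      · refine ⟨Ne.symm hxu, Or.inl ?_⟩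
        rcases dic x with h4 | h3
        · have hd4 : orderOf x ∣ 4 := orderOf_dvd_iff_pow_eq_one.mpr h4
          have hne1 : orderOf x ≠ 1 := by
            intro h
            rw [orderOf_eq_one_iff] at h
            subst h
            exact hx3 (one_pow 3)
          exact dvd_four_two hd4 hne1
        · exact absurd h3 hx3
  · -- n ≥ 5
    set Γ := Equiv.Perm (Fin n)
    set G := superpowerGraph Γ with hGdef
    set φ : Equiv.Perm (Fin 5) →* Γ :=
      Equiv.Perm.viaEmbeddingHom (Fin.castLEEmb h5) with hφ
    have hinj : Function.Injective φ :=
      Equiv.Perm.viaEmbeddingHom_injective (Fin.castLEEmb h5)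
    set u : Γ := φ (Equiv.swap 0 1) with hu
    set v : Γ := φ (Equiv.swap 0 2) with hv
    set w : Γ := φ (Equiv.swap 0 1 * Equiv.swap 1 2 * Equiv.swap 2 3) with hw
    set z : Γ := φ (Equiv.swap 0 1 * (Equiv.swap 2 3 * Equiv.swap 3 4)) with hz
    have ordu : orderOf u = 2 := by
      rw [hu, orderOf_injective φ hinj]; exact ord_two (by decide) (by decide)
    have ordv : orderOf v = 2 := by
      rw [hv, orderOf_injective φ hinj]; exact ord_two (by decide) (by decide)
    have ordw : orderOf w = 4 := by
      rw [hw, orderOf_injective φ hinj]; exact ord_four (by decide) (by decide)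
    have ordz : orderOf z = 6 := by
      rw [hz, orderOf_injective φ hinj]
      exact ord_six (by decide) (by decide) (by decide)
    have huv : G.Adj u v := spg_adj.mpr
      ⟨fun h => absurd (hinj h) (by decide), Or.inl (by rw [ordu, ordv])⟩
    have huw : G.Adj u w := spg_adj.mpr
      ⟨fun h => absurd (hinj h) (by decide), Or.inl (by rw [ordu, ordw]; norm_num)⟩
    have huz : G.Adj u z := spg_adj.mpr
      ⟨fun h => absurd (hinj h) (by decide), Or.inl (by rw [ordu, ordz]; norm_num)⟩
    have hwz : ¬ G.Adj w z := by
      intro h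
      rw [spg_adj, ordw, ordz] at h
      rcases h.2 with h | h <;> norm_num at h
    have hzw' : z ≠ w := fun h => absurd (hinj h) (by decide)
    have hsub : ∀ x, G.Adj w x → x = u ∨ G.Adj u x := by
      intro x hx
      by_cases hxu : x = u
      · exact Or.inl hxu
      · right
        rw [spg_adj, ordw] at hx
        rw [spg_adj, ordu]
        refine ⟨Ne.symm hxu, ?_⟩
        rcases hx.2 with h | h
        · exact Or.inl (dvd_trans (by norm_num) h)
        · rcases dvd_four_cases h with h' | h'
          · exact Or.inl h'
          · exact Or.inr h'
    refine not_minEdge G (spg_connected Γ) u v w huv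
      (spg_twin (ordu.trans ordv.symm)) huw.ne ?_
    exact gDeg_lt_of_subset G u w z huw huz hwz hzw' hsub
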